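/- Let p ∈ (1,2) and let α > 4π. Then for every K > 0 there exists a Lipschitz function u : ℝ² → ℝ with compact support such that ‖u‖ ≤ 1 and ∫_{ℝ²} Φ_{α,j₀}(u(x)) dx ≥ K; that is, sup{∫_{ℝ²} Φ_{α,j₀}(u) dx : u Lipschitz with compact support, ‖u‖ ≤ 1} = +∞. -/

import Mathlib

open MeasureTheory Real Filter Topology

noncomputable section

/-- The plane `ℝ²`. -/
abbrev R2 : Type := EuclideanSpace ℝ (Fin 2)

/-- `j₀ = min {j ∈ ℕ, j ≥ 1 : 2 j ≥ p*}` where `p* = 2p/(2-p)`; for `1 < p < 2` this is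
the ceiling of `p/(2-p)` (which is `> 1`). -/
def jzero (p : ℝ) : ℕ := ⌈p / (2 - p)⌉₊

/-- The Young function `Φ_{α,j₀}(t) = e^{α t²} - ∑_{j=0}^{j₀-1} (α^j/j!) t^{2j}`. -/
def Phi (α : ℝ) (j₀ : ℕ) (t : ℝ) : ℝ :=
  Real.exp (α * t ^ 2) - ∑ j ∈ Finset.range j₀, α ^ j / (j.factorial : ℝ) * |t| ^ (2 * j)

/-- The norm `‖u‖ = (∫ |∇u|² + (∫ |u|^p)^{2/p})^{1/2}` of the zero-mass space `E`. -/
def sobNorm (p : ℝ) (u : R2 → ℝ) : ℝ :=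
  Real.sqrt ((∫ x, ‖fderiv ℝ u x‖ ^ 2) + (∫ x, |u x| ^ p) ^ (2 / p))

/-- Chern-Simons gauge field `A₁[u](x) = -(1/4π) ∫ (x₂-y₂) u(y)²/|x-y|² dy`. -/
def gaugeA1 (u : R2 → ℝ) (x : R2) : ℝ :=
  -(1 / (4 * π)) * ∫ y, (x 1 - y 1) * (u y) ^ 2 / ‖x - y‖ ^ 2

/-- Chern-Simons gauge field `A₂[u](x) = (1/4π) ∫ (x₁-y₁) u(y)²/|x-y|² dy`. -/
def gaugeA2 (u : R2 → ℝ) (x : R2) : ℝ :=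
  (1 / (4 * π)) * ∫ y, (x 0 - y 0) * (u y) ^ 2 / ‖x - y‖ ^ 2

/-- Chern-Simons gauge field
`A₀[u](x) = (1/2π) ∫ [(x₁-y₁) A₂[u](y) - (x₂-y₂) A₁[u](y)] u(y)²/|x-y|² dy`. -/
def gaugeA0 (u : R2 → ℝ) (x : R2) : ℝ :=
  (1 / (2 * π)) *
    ∫ y, ((x 0 - y 0) * gaugeA2 u y - (x 1 - y 1) * gaugeA1 u y) * (u y) ^ 2 / ‖x - y‖ ^ 2

/-- `F(t) = ∫₀ᵗ f(s) ds`. -/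
def Fint (f : ℝ → ℝ) (t : ℝ) : ℝ := ∫ s in (0:ℝ)..t, f s

/-- `f` has critical exponential growth with exponent `α₀`:
`|f(t)| e^{-α t²} → 0` for `α > α₀` and `→ +∞` for `0 < α < α₀` as `t → +∞`. -/
def CriticalExpGrowth (f : ℝ → ℝ) (α₀ : ℝ) : Prop :=
  (∀ α > α₀, Tendsto (fun t => |f t| * Real.exp (-α * t ^ 2)) atTop (nhds 0)) ∧
  (∀ α : ℝ, 0 < α → α < α₀ → Tendsto (fun t => |f t| * Real.exp (-α * t ^ 2)) atTop atTop)

/-- The limit functional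
`J_∞(u) = (1/2)∫ (|∇u|² + (A₁[u]² + A₂[u]²)u²) + (a_∞/p)∫|u|^p - ∫ F(u)`. -/
def Jinf (p aInf : ℝ) (f : ℝ → ℝ) (u : R2 → ℝ) : ℝ :=
  (1 / 2) * (∫ x, (‖fderiv ℝ u x‖ ^ 2 + ((gaugeA1 u x) ^ 2 + (gaugeA2 u x) ^ 2) * (u x) ^ 2))
    + (aInf / p) * (∫ x, |u x| ^ p) - ∫ x, Fint f (u x)

/-- `J_∞'(u)[u] = ∫ (|∇u|² + 3(A₁[u]² + A₂[u]²)u²) + a_∞ ∫ |u|^p - ∫ f(u)u`. -/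
def JinfD (p aInf : ℝ) (f : ℝ → ℝ) (u : R2 → ℝ) : ℝ :=
  (∫ x, (‖fderiv ℝ u x‖ ^ 2 + 3 * ((gaugeA1 u x) ^ 2 + (gaugeA2 u x) ^ 2) * (u x) ^ 2))
    + aInf * (∫ x, |u x| ^ p) - ∫ x, f (u x) * u x

/-- `(f₂)`: `t ↦ f(t)/t⁵` is strictly increasing on `(0,∞)`. -/
def CondF2 (f : ℝ → ℝ) : Prop := StrictMonoOn (fun t => f t / t ^ 5) (Set.Ioi 0)

/-- `(f₃)`: there are `t₀ > 0`, `M₀ > 0`, `ϑ ∈ [0,1)` with `0 < t^ϑ F(t) ≤ M₀ f(t)` for `t > t₀`. -/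
def CondF3 (f : ℝ → ℝ) : Prop :=
  ∃ t₀ > (0:ℝ), ∃ M₀ > (0:ℝ), ∃ ϑ : ℝ, 0 ≤ ϑ ∧ ϑ < 1 ∧
    ∀ t > t₀, 0 < t ^ ϑ * Fint f t ∧ t ^ ϑ * Fint f t ≤ M₀ * f t

/-- `(f₄)`: `F(t) e^{-α₀ t²} → β₀ > 0` as `t → +∞`. -/
def CondF4 (f : ℝ → ℝ) (α₀ : ℝ) : Prop :=
  ∃ β₀ > (0:ℝ), Tendsto (fun t => Fint f t * Real.exp (-α₀ * t ^ 2)) atTop (nhds β₀)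

/-- radial profile -/
def gfun (b L r : ℝ) : ℝ := b * max 0 (-Real.log (max r (Real.exp (-L))))

def ufun (b L : ℝ) (x : R2) : ℝ := gfun b L ‖x‖

lemma gfun_nonneg {b : ℝ} (hb : 0 ≤ b) (L r : ℝ) : 0 ≤ gfun b L r :=
  mul_nonneg hb (le_max_left _ _)

lemma gfun_eq_zero {b L r : ℝ} (hL : 0 ≤ L) (hr : 1 ≤ r) : gfun b L r = 0 := by
  have h1 : Real.exp (-L) ≤ 1 := Real.exp_le_one_iff.2 (by linarith)
  rw [gfun, max_eq_left (le_trans h1 hr)]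
  have : 0 ≤ Real.log r := Real.log_nonneg hr
  rw [max_eq_left (by linarith), mul_zero]

lemma gfun_const {b L r : ℝ} (hL : 0 ≤ L) (hr : r ≤ Real.exp (-L)) : gfun b L r = b * L := by
  rw [gfun, max_eq_right hr, Real.log_exp, max_eq_right (by linarith)]
  ring

lemma gfun_log {b L r : ℝ} (h1 : Real.exp (-L) ≤ r) (h2 : r ≤ 1) : gfun b L r = -(b * Real.log r) := by
  have : Real.log r ≤ 0 := Real.log_nonpos (le_trans (Real.exp_pos _).le h1) h2
  rw [gfun, max_eq_left h1, max_eq_right (by linarith)]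
  ring

/-- one-sided log Lipschitz estimate -/
lemma log_sub_log_le {m a c : ℝ} (hm : 0 < m) (ha : m ≤ a) (hc : m ≤ c) :
    Real.log a - Real.log c ≤ m⁻¹ * |a - c| := by
  have hc0 : 0 < c := lt_of_lt_of_le hm hc
  have ha0 : 0 < a := lt_of_lt_of_le hm ha
  have h1 : Real.log a - Real.log c = Real.log (a / c) := (Real.log_div ha0.ne' hc0.ne').symm
  have h2 : Real.log (a / c) ≤ a / c - 1 := Real.log_le_sub_one_of_pos (by positivity)
  have h3 : a / c - 1 = (a - c) / c := by field_simp
  have h4 : (a - c) / c ≤ |a - c| / m := by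
    rw [div_le_div_iff₀ hc0 hm]
    have h6 := le_abs_self (a - c)
    nlinarith [abs_nonneg (a - c)]
  rw [h1]
  calc Real.log (a / c) ≤ (a - c) / c := by linarith
    _ ≤ |a - c| / m := h4
    _ = m⁻¹ * |a - c| := by rw [div_eq_inv_mul]

lemma abs_log_sub_log_le {m a c : ℝ} (hm : 0 < m) (ha : m ≤ a) (hc : m ≤ c) :
    |Real.log a - Real.log c| ≤ m⁻¹ * |a - c| := by
  rw [abs_sub_le_iff]
  constructor
  · exact log_sub_log_le hm ha hc
  · rw [abs_sub_comm]
    exact log_sub_log_le hm hc ha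

lemma ufun_lipschitz {b : ℝ} (L : ℝ) (hb : 0 ≤ b) :
    LipschitzWith (b * Real.exp L).toNNReal (ufun b L) := by
  apply LipschitzWith.of_dist_le_mul
  intro x y
  have hbe : (0:ℝ) ≤ b * Real.exp L := mul_nonneg hb (Real.exp_pos _).le
  rw [Real.coe_toNNReal _ hbe, Real.dist_eq]
  set m := Real.exp (-L) with hm
  have hm0 : 0 < m := Real.exp_pos _
  have h1 : |ufun b L x - ufun b L y| ≤
      b * |(-Real.log (max ‖x‖ m)) - (-Real.log (max ‖y‖ m))| := by
    rw [ufun, ufun, gfun, gfun, ← mul_sub, abs_mul, abs_of_nonneg hb]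
    refine mul_le_mul_of_nonneg_left ?_ hb
    have := abs_max_sub_max_le_abs (-Real.log (max ‖x‖ m)) (-Real.log (max ‖y‖ m)) 0
    rwa [max_comm _ (0:ℝ), max_comm (-Real.log (max ‖y‖ m)) (0:ℝ)] at this
  have h2 : |(-Real.log (max ‖x‖ m)) - (-Real.log (max ‖y‖ m))| =
      |Real.log (max ‖x‖ m) - Real.log (max ‖y‖ m)| := by
    rw [← abs_neg]; ring_nf
  have h3 : |Real.log (max ‖x‖ m) - Real.log (max ‖y‖ m)| ≤ m⁻¹ * |max ‖x‖ m - max ‖y‖ m| :=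
    abs_log_sub_log_le hm0 (le_max_right _ _) (le_max_right _ _)
  have h4 : |max ‖x‖ m - max ‖y‖ m| ≤ |‖x‖ - ‖y‖| := abs_max_sub_max_le_abs _ _ _
  have h5 : |‖x‖ - ‖y‖| ≤ ‖x - y‖ := abs_norm_sub_norm_le _ _
  have hminv : m⁻¹ = Real.exp L := by rw [hm, ← Real.exp_neg, neg_neg]
  calc |ufun b L x - ufun b L y| ≤ b * (m⁻¹ * ‖x - y‖) := by
        refine le_trans h1 ?_
        have : |(-Real.log (max ‖x‖ m)) - (-Real.log (max ‖y‖ m))| ≤ m⁻¹ * ‖x - y‖ := by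
          rw [h2]
          refine le_trans h3 ?_
          gcongr
          exact le_trans h4 h5
        gcongr
    _ = b * Real.exp L * dist x y := by rw [hminv, dist_eq_norm]; ring

lemma ufun_hasCompactSupport {b L : ℝ} (hL : 0 ≤ L) : HasCompactSupport (ufun b L) := by
  apply HasCompactSupport.intro (isCompact_closedBall (0:R2) 1)
  intro x hx
  simp only [Metric.mem_closedBall, dist_zero_right, not_le] at hx
  exact gfun_eq_zero hL hx.le

/-- radial profile of `‖∇u‖²` -/
def Dr (b L r : ℝ) : ℝ := if Real.exp (-L) < r ∧ r < 1 then b ^ 2 / r ^ 2 else 0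

lemma fderiv_ufun_sq {b L : ℝ} (hb : 0 ≤ b) (hL : 0 < L) {x : R2}
    (h1 : ‖x‖ ≠ Real.exp (-L)) (h2 : ‖x‖ ≠ 1) :
    ‖fderiv ℝ (ufun b L) x‖ ^ 2 = Dr b L ‖x‖ := by
  rcases lt_trichotomy ‖x‖ (Real.exp (-L)) with hlt | heq | hgt
  · -- constant region
    have hU : Metric.ball (0:R2) (Real.exp (-L)) ∈ 𝓝 x :=
      Metric.isOpen_ball.mem_nhds (by rwa [mem_ball_zero_iff])
    have heq : ufun b L =ᶠ[𝓝 x] fun _ => b * L :=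
      Filter.eventuallyEq_of_mem hU fun y hy =>
        gfun_const hL.le (le_of_lt (mem_ball_zero_iff.1 hy))
    rw [heq.fderiv_eq, fderiv_fun_const]
    simp only [Pi.zero_apply, norm_zero]
    rw [Dr, if_neg (by push_neg; intro h; exact absurd h (not_lt.2 hlt.le))]
    norm_num
  · exact absurd heq h1
  · rcases lt_trichotomy ‖x‖ 1 with hlt1 | heq1 | hgt1
    · -- log region
      have hUopen : IsOpen ({y : R2 | Real.exp (-L) < ‖y‖} ∩ {y : R2 | ‖y‖ < 1}) :=
        (isOpen_lt continuous_const continuous_norm).inter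
          (isOpen_lt continuous_norm continuous_const)
      have hU : ({y : R2 | Real.exp (-L) < ‖y‖} ∩ {y : R2 | ‖y‖ < 1}) ∈ 𝓝 x :=
        hUopen.mem_nhds ⟨hgt, hlt1⟩
      have heqv : ufun b L =ᶠ[𝓝 x] fun y => -(b / 2) * Real.log (‖y‖ ^ 2) :=
        Filter.eventuallyEq_of_mem hU fun y hy => by
          rw [ufun, gfun_log hy.1.le hy.2.le, Real.log_pow]
          push_cast; ring
      have hx0 : (0:ℝ) < ‖x‖ := lt_trans (Real.exp_pos _) hgt
      have hx2 : ‖x‖ ^ 2 ≠ 0 := by positivity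
      have hd : HasFDerivAt (fun y : R2 => -(b / 2) * Real.log (‖y‖ ^ 2))
          ((-(b / 2)) • ((‖x‖ ^ 2)⁻¹ • (2 • innerSL ℝ x))) x :=
        ((hasStrictFDerivAt_norm_sq x).hasFDerivAt.log hx2).const_mul _
      rw [heqv.fderiv_eq, hd.fderiv]
      have h2s : (2 • innerSL ℝ x : R2 →L[ℝ] ℝ) = (2:ℝ) • innerSL ℝ x := by
        rw [← Nat.cast_smul_eq_nsmul ℝ 2]; norm_num
      rw [h2s, smul_smul, smul_smul, norm_smul]
      rw [innerSL_apply_norm]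
      rw [Real.norm_eq_abs, Dr, if_pos ⟨hgt, hlt1⟩]
      have hnp : -(b / 2) * (‖x‖ ^ 2)⁻¹ * 2 ≤ 0 := by
        have : (0:ℝ) ≤ b / 2 * (‖x‖ ^ 2)⁻¹ * 2 := by positivity
        linarith
      rw [abs_of_nonpos hnp]
      have hxne : ‖x‖ ≠ 0 := hx0.ne'
      field_simp
    · exact absurd heq1 h2
    · -- zero region
      have hU : {y : R2 | 1 < ‖y‖} ∈ 𝓝 x :=
        (isOpen_lt continuous_const continuous_norm).mem_nhds hgt1
      have heq : ufun b L =ᶠ[𝓝 x] fun _ => (0:ℝ) :=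
        Filter.eventuallyEq_of_mem hU fun y hy => gfun_eq_zero hL.le (le_of_lt hy)
      rw [heq.fderiv_eq, fderiv_fun_const]
      simp only [Pi.zero_apply, norm_zero]
      rw [Dr, if_neg (by push_neg; intro _; linarith)]
      norm_num

lemma ae_norm_ne (r : ℝ) : ∀ᵐ x : R2, ‖x‖ ≠ r := by
  rw [ae_iff]
  have hs : {x : R2 | ¬‖x‖ ≠ r} = Metric.sphere 0 r := by
    ext x; simp [mem_sphere_zero_iff_norm]
  rw [hs]
  exact Measure.addHaar_sphere volume 0 r

lemma volume_ball_R2 : (volume (Metric.ball (0:R2) 1)).toReal = π := by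
  rw [EuclideanSpace.volume_ball]
  simp only [Fintype.card_fin]
  norm_num
  exact Real.sq_sqrt Real.pi_nonneg

lemma dirichlet_integral {b L : ℝ} (hb : 0 ≤ b) (hL : 0 < L) :
    ∫ x : R2, ‖fderiv ℝ (ufun b L) x‖ ^ 2 = 2 * π * (b ^ 2 * L) := by
  have hexp1 : Real.exp (-L) < 1 := Real.exp_lt_one_iff.2 (by linarith)
  have hexp0 : (0:ℝ) < Real.exp (-L) := Real.exp_pos _
  have hae : (fun x : R2 => ‖fderiv ℝ (ufun b L) x‖ ^ 2) =ᵐ[volume]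
      fun x => Dr b L ‖x‖ := by
    filter_upwards [ae_norm_ne (Real.exp (-L)), ae_norm_ne 1] with x hx1 hx2
    exact fderiv_ufun_sq hb hL hx1 hx2
  rw [integral_congr_ae hae]
  rw [MeasureTheory.integral_fun_norm_addHaar volume (Dr b L)]
  have hdim : Module.finrank ℝ R2 = 2 := finrank_euclideanSpace_fin
  rw [hdim, measureReal_def, volume_ball_R2]
  have hkey : ∫ y in Set.Ioi (0:ℝ), y ^ (2-1) • Dr b L y = b ^ 2 * L := by
    have hcong : ∀ y ∈ Set.Ioi (0:ℝ), y ^ (2-1) • Dr b L y =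
        Set.indicator (Set.Ioo (Real.exp (-L)) 1) (fun y => b ^ 2 * y⁻¹) y := by
      intro y hy
      simp only [pow_one, smul_eq_mul]
      by_cases h : y ∈ Set.Ioo (Real.exp (-L)) 1
      · rw [Set.indicator_of_mem h, Dr, if_pos ⟨h.1, h.2⟩]
        have : y ≠ 0 := (lt_trans hexp0 h.1).ne'
        field_simp
        ring
      · rw [Set.indicator_of_notMem h, Dr,
          if_neg (fun hc => h ⟨hc.1, hc.2⟩), mul_zero]
    rw [setIntegral_congr_fun measurableSet_Ioi hcong]
    rw [integral_indicator measurableSet_Ioo]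
    rw [Measure.restrict_restrict measurableSet_Ioo,
      Set.inter_eq_left.mpr
        (fun y (hy : y ∈ Set.Ioo (Real.exp (-L)) 1) => Set.mem_Ioi.mpr (lt_trans hexp0 hy.1))]
    rw [MeasureTheory.integral_const_mul]
    rw [← integral_Ioc_eq_integral_Ioo,
      ← intervalIntegral.integral_of_le hexp1.le,
      integral_inv_of_pos hexp0 one_pos]
    rw [one_div, Real.log_inv, Real.log_exp, neg_neg]
  rw [hkey]
  simp only [nsmul_eq_mul, smul_eq_mul, Nat.cast_ofNat]
  ring

lemma gfun_le {b L : ℝ} (hb : 0 ≤ b) (hL : 0 < L) {y : ℝ} (hy : 0 < y) :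
    |gfun b L y| ≤ 4 * b * y ^ (-(1/4) : ℝ) := by
  have hgnn : 0 ≤ gfun b L y := gfun_nonneg hb _ _
  rw [abs_of_nonneg hgnn, gfun]
  have hstep : max 0 (-Real.log (max y (Real.exp (-L)))) ≤ 4 * y ^ (-(1/4) : ℝ) := by
    have hlog : Real.log y ≤ Real.log (max y (Real.exp (-L))) :=
      Real.log_le_log hy (le_max_left _ _)
    have h1 : max 0 (-Real.log (max y (Real.exp (-L)))) ≤ max 0 (-Real.log y) :=
      max_le_max le_rfl (neg_le_neg hlog)
    refine le_trans h1 ?_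
    rcases le_or_gt (-Real.log y) 0 with hc | hc
    · rw [max_eq_left hc]; positivity
    · rw [max_eq_right hc.le, ← Real.log_inv]
      have hinv : 0 < y⁻¹ := inv_pos.2 hy
      have h4 : Real.log y⁻¹ = 4 * Real.log (y⁻¹ ^ ((1/4) : ℝ)) := by
        rw [Real.log_rpow hinv]; ring
      have h5 : Real.log (y⁻¹ ^ ((1/4) : ℝ)) ≤ y⁻¹ ^ ((1/4) : ℝ) := by
        have := Real.log_le_sub_one_of_pos (x := y⁻¹ ^ ((1/4) : ℝ)) (by positivity)
        linarith
      have h6 : y⁻¹ ^ ((1/4) : ℝ) = y ^ (-(1/4) : ℝ) := by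
        rw [Real.inv_rpow hy.le, ← Real.rpow_neg hy.le]
      rw [h4, ← h6]
      linarith
  calc b * max 0 (-Real.log (max y (Real.exp (-L)))) ≤ b * (4 * y ^ (-(1/4) : ℝ)) := by
        exact mul_le_mul_of_nonneg_left hstep hb
    _ = 4 * b * y ^ (-(1/4) : ℝ) := by ring

lemma lp_integral_le {b L p : ℝ} (hb : 0 ≤ b) (hL : 0 < L) (hp1 : 1 < p) (hp2 : p < 2) :
    ∫ x : R2, |ufun b L x| ^ p ≤ 2 * π * ((4 * b) ^ p * (2/3)) := by
  have hp0 : 0 < p := by linarith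
  simp only [ufun]
  rw [MeasureTheory.integral_fun_norm_addHaar volume (fun r => |gfun b L r| ^ p)]
  have hdim : Module.finrank ℝ R2 = 2 := finrank_euclideanSpace_fin
  rw [hdim, measureReal_def, volume_ball_R2]
  set ψ : ℝ → ℝ := Set.indicator (Set.Ioc (0:ℝ) 1) (fun y => (4 * b) ^ p * y ^ ((1/2) : ℝ))
    with hψ
  have hψint : Integrable ψ (volume.restrict (Set.Ioi 0)) := by
    rw [hψ, integrable_indicator_iff measurableSet_Ioc]
    have hres : (volume.restrict (Set.Ioi (0:ℝ))).restrict (Set.Ioc (0:ℝ) 1) =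
        volume.restrict (Set.Ioc (0:ℝ) 1) := by
      rw [Measure.restrict_restrict measurableSet_Ioc,
        Set.inter_eq_left.mpr (fun y (hy : y ∈ Set.Ioc (0:ℝ) 1) => Set.mem_Ioi.mpr hy.1)]
    unfold IntegrableOn
    rw [hres]
    exact (((intervalIntegrable_iff_integrableOn_Ioc_of_le zero_le_one).mp
      (intervalIntegral.intervalIntegrable_rpow' (by norm_num))).const_mul _)
  have hmono : ∫ y in Set.Ioi (0:ℝ), y ^ (2-1) • |gfun b L y| ^ p ≤
      ∫ y in Set.Ioi (0:ℝ), ψ y := by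
    refine integral_mono_of_nonneg ?_ hψint ?_
    · refine (ae_restrict_iff' measurableSet_Ioi).2 (ae_of_all _ fun y hy => ?_)
      have : (0:ℝ) < y := hy
      positivity
    · refine (ae_restrict_iff' measurableSet_Ioi).2 (ae_of_all _ fun y hy => ?_)
      have hy : (0:ℝ) < y := hy
      simp only [show (2-1:ℕ) = 1 from rfl, pow_one, smul_eq_mul]
      by_cases hy1 : y ≤ 1
      · rw [hψ, Set.indicator_of_mem (Set.mem_Ioc.mpr ⟨hy, hy1⟩)]
        have h1 : |gfun b L y| ^ p ≤ (4 * b * y ^ (-(1/4) : ℝ)) ^ p :=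
          Real.rpow_le_rpow (abs_nonneg _) (gfun_le hb hL hy) hp0.le
        have h2 : (4 * b * y ^ (-(1/4) : ℝ)) ^ p = (4 * b) ^ p * y ^ ((-(1/4)) * p) := by
          rw [Real.mul_rpow (by positivity) (by positivity), Real.rpow_mul hy.le]
        have h3 : y * ((4 * b) ^ p * y ^ ((-(1/4)) * p)) =
            (4 * b) ^ p * y ^ (1 + (-(1/4)) * p) := by
          rw [Real.rpow_add hy, Real.rpow_one]; ring
        have h4 : y ^ (1 + (-(1/4)) * p) ≤ y ^ ((1/2) : ℝ) :=
          Real.rpow_le_rpow_of_exponent_ge hy hy1 (by linarith)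
        calc y * |gfun b L y| ^ p ≤ y * ((4 * b) ^ p * y ^ ((-(1/4)) * p)) := by
              rw [h2] at h1
              exact mul_le_mul_of_nonneg_left h1 hy.le
          _ = (4 * b) ^ p * y ^ (1 + (-(1/4)) * p) := h3
          _ ≤ (4 * b) ^ p * y ^ ((1/2) : ℝ) :=
              mul_le_mul_of_nonneg_left h4 (by positivity)
      · push_neg at hy1
        rw [gfun_eq_zero hL.le hy1.le, abs_zero, Real.zero_rpow hp0.ne', mul_zero]
        exact Set.indicator_nonneg (fun z hz =>
          mul_nonneg (Real.rpow_nonneg (by positivity) _)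
            (Real.rpow_nonneg hz.1.le _)) _
  have hψval : ∫ y in Set.Ioi (0:ℝ), ψ y = (4 * b) ^ p * (2/3) := by
    rw [hψ, integral_indicator measurableSet_Ioc]
    rw [Measure.restrict_restrict measurableSet_Ioc,
      Set.inter_eq_left.mpr (fun y (hy : y ∈ Set.Ioc (0:ℝ) 1) => Set.mem_Ioi.mpr hy.1)]
    rw [MeasureTheory.integral_const_mul]
    have : ∫ y in Set.Ioc (0:ℝ) 1, y ^ ((1/2) : ℝ) = 2/3 := by
      rw [← intervalIntegral.integral_of_le zero_le_one,
        integral_rpow (Or.inl (by norm_num))]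
      rw [Real.one_rpow, Real.zero_rpow (by norm_num)]
      norm_num
    rw [this]
  have hI := le_trans hmono (le_of_eq hψval)
  calc (2:ℕ) • (π • ∫ y in Set.Ioi (0:ℝ), y ^ (2-1) • |gfun b L y| ^ p)
      = 2 * (π * ∫ y in Set.Ioi (0:ℝ), y ^ (2-1) • |gfun b L y| ^ p) := by
        simp [nsmul_eq_mul, smul_eq_mul]
    _ ≤ 2 * (π * ((4 * b) ^ p * (2/3))) := by
        have hπ := Real.pi_nonneg
        nlinarith [hI]
    _ = 2 * π * ((4 * b) ^ p * (2/3)) := by ring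

lemma Phi_term_eq (α t : ℝ) (j : ℕ) :
    α ^ j / (j.factorial : ℝ) * |t| ^ (2 * j) = (α * t ^ 2) ^ j / (j.factorial : ℝ) := by
  rw [pow_mul, sq_abs, mul_pow]
  ring

lemma Phi_nonneg {α : ℝ} (hα : 0 ≤ α) (j₀ : ℕ) (t : ℝ) : 0 ≤ Phi α j₀ t := by
  rw [Phi, sub_nonneg]
  calc ∑ j ∈ Finset.range j₀, α ^ j / (j.factorial : ℝ) * |t| ^ (2 * j)
      = ∑ j ∈ Finset.range j₀, (α * t ^ 2) ^ j / (j.factorial : ℝ) := by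
        exact Finset.sum_congr rfl fun j _ => Phi_term_eq α t j
    _ ≤ Real.exp (α * t ^ 2) := Real.sum_le_exp_of_nonneg (by positivity) _

lemma Phi_zero {α : ℝ} {j₀ : ℕ} (h : 1 ≤ j₀) : Phi α j₀ 0 = 0 := by
  rw [Phi]
  have hsum : ∑ j ∈ Finset.range j₀, α ^ j / (j.factorial : ℝ) * |(0:ℝ)| ^ (2 * j) = 1 := by
    rw [Finset.sum_eq_single_of_mem 0 (Finset.mem_range.2 h)]
    · simp
    · intro j _ hj
      simp [abs_zero, zero_pow (by omega : 2 * j ≠ 0)]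
  rw [hsum]
  simp

lemma Phi_lower {α : ℝ} (j₀ : ℕ) {c : ℝ} (hs : 1 ≤ α * c ^ 2) :
    Real.exp (α * c ^ 2) - (j₀ : ℝ) * (α * c ^ 2) ^ j₀ ≤ Phi α j₀ c := by
  rw [Phi]
  have hsum : ∑ j ∈ Finset.range j₀, α ^ j / (j.factorial : ℝ) * |c| ^ (2 * j) ≤
      (j₀ : ℝ) * (α * c ^ 2) ^ j₀ := by
    calc ∑ j ∈ Finset.range j₀, α ^ j / (j.factorial : ℝ) * |c| ^ (2 * j)
        = ∑ j ∈ Finset.range j₀, (α * c ^ 2) ^ j / (j.factorial : ℝ) := by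
          exact Finset.sum_congr rfl fun j _ => Phi_term_eq α c j
      _ ≤ ∑ j ∈ Finset.range j₀, (α * c ^ 2) ^ j₀ := by
          refine Finset.sum_le_sum fun j hj => ?_
          have h1 : (α * c ^ 2) ^ j / (j.factorial : ℝ) ≤ (α * c ^ 2) ^ j := by
            apply div_le_self (by positivity)
            exact_mod_cast Nat.one_le_iff_ne_zero.2 j.factorial_ne_zero
          refine le_trans h1 (pow_le_pow_right₀ (by linarith) ?_)
          exact le_of_lt (Finset.mem_range.1 hj)
      _ = (j₀ : ℝ) * (α * c ^ 2) ^ j₀ := by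
          rw [Finset.sum_const, Finset.card_range, nsmul_eq_mul]
  linarith

lemma volume_closedBall_R2 {r : ℝ} (hr : 0 ≤ r) :
    (volume (Metric.closedBall (0:R2) r)).toReal = r ^ 2 * π := by
  rw [EuclideanSpace.volume_closedBall]
  simp only [Fintype.card_fin]
  norm_num
  rw [ENNReal.toReal_ofReal hr, Real.sq_sqrt Real.pi_nonneg]

/-- Theorem 1.2, supercritical case: for `p ∈ (1,2)` and `α > 4π` the
supremum of `∫ Φ_{α,j₀}(u)` over Lipschitz compactly supported `u` with `‖u‖ ≤ 1` is `+∞`. -/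
theorem stmt_1 (p α : ℝ) (hp1 : 1 < p) (hp2 : p < 2) (hα : 4 * π < α) :
    ∀ K : ℝ, 0 < K → ∃ u : R2 → ℝ, (∃ L : NNReal, LipschitzWith L u) ∧ HasCompactSupport u ∧
      sobNorm p u ≤ 1 ∧ K ≤ ∫ x, Phi α (jzero p) (u x) := by
  intro K hK
  have hπ : (0:ℝ) < π := Real.pi_pos
  have hα0 : (0:ℝ) < α := lt_trans (by positivity) hα
  have hp0 : (0:ℝ) < p := by linarith
  set T : ℝ := (4 * π / α + 1) / 2 with hT
  have hdiv : 4 * π / α < 1 := (div_lt_one hα0).2 hα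
  have hdiv0 : 0 < 4 * π / α := by positivity
  have hT1 : T < 1 := by rw [hT]; linarith
  have hT0 : 0 < T := by rw [hT]; linarith
  set γ : ℝ := α * T / (2 * π) with hγ
  have hγeq : γ = 1 + α / (4 * π) := by
    rw [hγ, hT]; field_simp; ring
  have hγ2 : 2 < γ := by
    rw [hγeq]
    have : 1 < α / (4 * π) := (one_lt_div (by positivity)).2 hα
    linarith
  set n := jzero p with hn
  have hj₀ : 1 ≤ n := by
    rw [hn, jzero]
    have : 0 < p / (2 - p) := div_pos hp0 (by linarith)
    exact Nat.one_le_iff_ne_zero.2 (Nat.ceil_pos.2 this).ne'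
  -- constants for the Lp bound
  set C1 : ℝ := 2 * π * (2 / 3) * 4 ^ p with hC1
  have hC1pos : 0 < C1 := by rw [hC1]; positivity
  set Cst : ℝ := C1 ^ (2 / p) * (T / (2 * π)) with hCst
  have hCstpos : 0 < Cst := by rw [hCst]; positivity
  -- eventual conditions
  have E1 : ∀ᶠ L in atTop, (1:ℝ) ≤ L := eventually_ge_atTop 1
  have E2 : ∀ᶠ L in atTop, (1:ℝ) ≤ γ * L :=
    (tendsto_id.const_mul_atTop (by linarith : (0:ℝ) < γ)).eventually_ge_atTop 1
  have E3 : ∀ᶠ L in atTop, Cst / L ≤ 1 - T := by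
    have h0 : Tendsto (fun L : ℝ => Cst / L) atTop (nhds 0) :=
      tendsto_const_nhds.div_atTop tendsto_id
    exact h0.eventually (eventually_le_nhds (by linarith))
  have E4a : ∀ᶠ L in atTop, K + π ≤ π * Real.exp ((γ - 2) * L) := by
    have h1 : Tendsto (fun L : ℝ => (γ - 2) * L) atTop atTop :=
      tendsto_id.const_mul_atTop (by linarith)
    have h2 : Tendsto (fun L : ℝ => π * Real.exp ((γ - 2) * L)) atTop atTop :=
      (Real.tendsto_exp_atTop.comp h1).const_mul_atTop hπ
    exact h2.eventually_ge_atTop (K + π)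
  have E4b : ∀ᶠ L in atTop, π * n * ((γ * L) ^ n * Real.exp (-(2 * L))) ≤ π := by
    have h2L : Tendsto (fun L : ℝ => 2 * L) atTop atTop :=
      tendsto_id.const_mul_atTop two_pos
    have hb0 : Tendsto (fun L : ℝ => (2 * L) ^ n * Real.exp (-(2 * L))) atTop (nhds 0) :=
      (tendsto_pow_mul_exp_neg_atTop_nhds_zero n).comp h2L
    have hb1 : Tendsto (fun L : ℝ => (π * n * (γ / 2) ^ n) *
        ((2 * L) ^ n * Real.exp (-(2 * L)))) atTop (nhds 0) := by
      have := hb0.const_mul (π * n * (γ / 2) ^ n)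
      simpa using this
    refine (hb1.eventually (eventually_le_nhds hπ)).mono fun L hL => ?_
    have heq : π * n * ((γ * L) ^ n * Real.exp (-(2 * L))) =
        (π * n * (γ / 2) ^ n) * ((2 * L) ^ n * Real.exp (-(2 * L))) := by
      have h : (γ * L) ^ n = (γ / 2) ^ n * (2 * L) ^ n := by
        rw [← mul_pow]; ring_nf
      rw [h]; ring
    rw [heq]
    exact hL
  obtain ⟨L, hL1, hL2, hL3, hL4a, hL4b⟩ := (E1.and (E2.and (E3.and (E4a.and E4b)))).exists
  have hLpos : (0:ℝ) < L := lt_of_lt_of_le one_pos hL1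
  set b : ℝ := Real.sqrt (T / (2 * π * L)) with hbdef
  have hb0 : 0 ≤ b := Real.sqrt_nonneg _
  have hb2 : b ^ 2 = T / (2 * π * L) := Real.sq_sqrt (by positivity)
  refine ⟨ufun b L, ⟨_, ufun_lipschitz L hb0⟩, ufun_hasCompactSupport hLpos.le, ?_, ?_⟩
  · -- norm bound
    rw [sobNorm]
    have hA : ∫ x : R2, ‖fderiv ℝ (ufun b L) x‖ ^ 2 = T := by
      rw [dirichlet_integral hb0 hLpos, hb2]
      field_simp
    have hBnn : 0 ≤ ∫ x : R2, |ufun b L x| ^ p :=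
      integral_nonneg fun x => Real.rpow_nonneg (abs_nonneg _) _
    have hBle : ∫ x : R2, |ufun b L x| ^ p ≤ C1 * b ^ p := by
      refine le_trans (lp_integral_le hb0 hLpos hp1 hp2) ?_
      rw [hC1, Real.mul_rpow (by norm_num) hb0]
      exact le_of_eq (by ring)
    have hBp : (∫ x : R2, |ufun b L x| ^ p) ^ (2 / p) ≤ Cst / L := by
      have h1 : (∫ x : R2, |ufun b L x| ^ p) ^ (2 / p) ≤ (C1 * b ^ p) ^ (2 / p) :=
        Real.rpow_le_rpow hBnn hBle (by positivity)
      refine le_trans h1 ?_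
      rw [Real.mul_rpow hC1pos.le (Real.rpow_nonneg hb0 _),
        ← Real.rpow_mul hb0]
      have hpe : p * (2 / p) = 2 := by field_simp
      rw [hpe]
      have hb2' : b ^ (2:ℝ) = T / (2 * π * L) := by
        have hcast : b ^ (2:ℝ) = b ^ (2:ℕ) := by
          rw [← Real.rpow_natCast b 2]; norm_num
        rw [hcast, hb2]
      rw [hb2', hCst]
      have hfin : C1 ^ (2 / p) * (T / (2 * π * L)) = C1 ^ (2 / p) * (T / (2 * π)) / L := by
        field_simp
      exact le_of_eq hfin
    have hsum : (∫ x : R2, ‖fderiv ℝ (ufun b L) x‖ ^ 2) +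
        (∫ x : R2, |ufun b L x| ^ p) ^ (2 / p) ≤ 1 := by
      rw [hA]
      have := le_trans hBp hL3
      linarith
    calc Real.sqrt _ ≤ Real.sqrt 1 := Real.sqrt_le_sqrt hsum
      _ = 1 := Real.sqrt_one
  · -- Phi integral bound
    have hcu : Continuous (ufun b L) := (ufun_lipschitz L hb0).continuous
    have hΦc : Continuous (Phi α n) := by
      have h1 : Continuous fun t : ℝ => Real.exp (α * t ^ 2) :=
        Real.continuous_exp.comp (continuous_const.mul (continuous_pow 2))
      have h2 : Continuous fun t : ℝ =>
          ∑ j ∈ Finset.range n, α ^ j / (j.factorial : ℝ) * |t| ^ (2 * j) :=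
        continuous_finset_sum _ fun j _ =>
          continuous_const.mul (continuous_abs.pow (2 * j))
      exact h1.sub h2
    have hsupp : HasCompactSupport (fun x => Phi α n (ufun b L x)) :=
      (ufun_hasCompactSupport (b := b) hLpos.le).comp_left (g := Phi α n) (Phi_zero hj₀)
    have hint : Integrable (fun x => Phi α n (ufun b L x)) :=
      (hΦc.comp hcu).integrable_of_hasCompactSupport hsupp
    have hnn : 0 ≤ᵐ[volume] fun x : R2 => Phi α n (ufun b L x) :=
      ae_of_all _ fun x => Phi_nonneg hα0.le _ _
    have hset := setIntegral_le_integral (s := Metric.closedBall (0:R2) (Real.exp (-L)))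
      hint hnn
    have hconst : ∫ x in Metric.closedBall (0:R2) (Real.exp (-L)), Phi α n (ufun b L x) =
        (volume (Metric.closedBall (0:R2) (Real.exp (-L)))).toReal * Phi α n (b * L) := by
      rw [setIntegral_congr_fun measurableSet_closedBall
        (fun x hx => by rw [ufun, gfun_const hLpos.le (mem_closedBall_zero_iff.1 hx)])]
      rw [setIntegral_const, smul_eq_mul, measureReal_def]
    have hvol : (volume (Metric.closedBall (0:R2) (Real.exp (-L)))).toReal =
        Real.exp (-L) ^ 2 * π := volume_closedBall_R2 (Real.exp_pos _).le
    have hc2 : α * (b * L) ^ 2 = γ * L := by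
      have : (b * L) ^ 2 = b ^ 2 * L ^ 2 := by ring
      rw [this, hb2, hγ]
      field_simp
    have hΦlow : Real.exp (γ * L) - (n : ℝ) * (γ * L) ^ n ≤ Phi α n (b * L) := by
      have := Phi_lower (α := α) n (c := b * L) (by rw [hc2]; exact hL2)
      rwa [hc2] at this
    have hexp2 : Real.exp (-L) ^ 2 = Real.exp (-(2 * L)) := by
      rw [← Real.exp_nat_mul]
      ring_nf
    have hchain : K ≤ (volume (Metric.closedBall (0:R2) (Real.exp (-L)))).toReal *
        Phi α n (b * L) := by
      rw [hvol, hexp2]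
      have hkey : Real.exp (-(2 * L)) * π * (Real.exp (γ * L) - (n : ℝ) * (γ * L) ^ n) =
          π * Real.exp ((γ - 2) * L) - π * n * ((γ * L) ^ n * Real.exp (-(2 * L))) := by
        rw [show (γ - 2) * L = γ * L + (-(2 * L)) from by ring, Real.exp_add]
        ring
      have h1 : K ≤ Real.exp (-(2 * L)) * π * (Real.exp (γ * L) - (n : ℝ) * (γ * L) ^ n) := by
        rw [hkey]
        linarith
      refine le_trans h1 ?_
      have hpos : (0:ℝ) ≤ Real.exp (-(2 * L)) * π := by positivity
      exact mul_le_mul_of_nonneg_left hΦlow hpos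
    exact le_trans (le_trans hchain (le_of_eq hconst.symm)) hset
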